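/- Let W(P)(x) = 3x⁸ + 86x⁷ + 658x⁶ + 1946x⁵ + 2534x⁴ + 1420x³ + 336x² + 32x + 1. Then W(P)(x) is not real-rooted (it has a non-real complex root), but has nonnegative coefficients and is log-concave. -/

import Mathlib

open Polynomial

/-- Stembridge's `P`-Eulerian polynomial, a counterexample to the Neggers–Stanley
conjecture. -/
noncomputable def WStem : Polynomial ℝ :=
  3 * X ^ 8 + 86 * X ^ 7 + 658 * X ^ 6 + 1946 * X ^ 5 + 2534 * X ^ 4 +
    1420 * X ^ 3 + 336 * X ^ 2 + 32 * X + 1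

lemma coeff_WStem (i : ℕ) :
    WStem.coeff i = [(1:ℝ),32,336,1420,2534,1946,658,86,3].getD i 0 := by
  simp only [WStem, show (3:ℝ[X]) = C 3 from (map_ofNat C 3).symm,
    show (86:ℝ[X]) = C 86 from (map_ofNat C 86).symm,
    show (658:ℝ[X]) = C 658 from (map_ofNat C 658).symm,
    show (1946:ℝ[X]) = C 1946 from (map_ofNat C 1946).symm,
    show (2534:ℝ[X]) = C 2534 from (map_ofNat C 2534).symm,
    show (1420:ℝ[X]) = C 1420 from (map_ofNat C 1420).symm,
    show (336:ℝ[X]) = C 336 from (map_ofNat C 336).symm,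
    show (32:ℝ[X]) = C 32 from (map_ofNat C 32).symm,
    coeff_add, coeff_C_mul, coeff_X_pow, coeff_X, coeff_one]
  rcases i with _|_|_|_|_|_|_|_|_|i
  · norm_num
  · norm_num
  · norm_num
  · norm_num
  · norm_num
  · norm_num
  · norm_num
  · norm_num
  · norm_num
  · rw [if_neg (by omega), if_neg (by omega), if_neg (by omega), if_neg (by omega),
      if_neg (by omega), if_neg (by omega), if_neg (by omega), if_neg (by omega),
      if_neg (by omega)]
    norm_num

lemma msprod_le (s : Multiset ℂ) (f g : ℂ → ℝ)
    (h0 : ∀ a ∈ s, 0 ≤ f a) (h : ∀ a ∈ s, f a ≤ g a) :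
    (s.map f).prod ≤ (s.map g).prod := by
  induction s using Multiset.induction_on with
  | empty => simp
  | cons a s ih =>
    simp only [Multiset.map_cons, Multiset.prod_cons]
    have h0' : ∀ b ∈ s, 0 ≤ f b := fun b hb => h0 b (Multiset.mem_cons_of_mem hb)
    have h' : ∀ b ∈ s, f b ≤ g b := fun b hb => h b (Multiset.mem_cons_of_mem hb)
    have hps : 0 ≤ (Multiset.map f s).prod := Multiset.prod_nonneg (by
      intro x hx
      obtain ⟨b, hb, rfl⟩ := Multiset.mem_map.mp hx
      exact h0' b hb)
    have ha := h0 a (Multiset.mem_cons_self a s)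
    exact mul_le_mul (h a (Multiset.mem_cons_self a s)) (ih h0' h') hps
      (le_trans ha (h a (Multiset.mem_cons_self a s)))

lemma WStem_no_real_roots_only (hc : ∀ z : ℂ, (WStem.map (algebraMap ℝ ℂ)).eval z = 0 → z.im = 0) :
    False := by
  set P := WStem.map (algebraMap ℝ ℂ) with hP
  have hP0 : P ≠ 0 := by
    intro h0
    have := congrArg (Polynomial.eval 0) h0
    simp [hP, WStem] at this
  have hsplit : P.Splits := IsAlgClosed.splits _
  have hfac := hsplit.eq_prod_roots
  set x : ℂ := ((-9/5 : ℝ) : ℂ) with hxdef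
  set z : ℂ := x + ((1/8 : ℝ) : ℂ) * Complex.I with hzdef
  have hx : ∀ w : ℂ, Complex.normSq (P.eval w)
      = Complex.normSq P.leadingCoeff
        * ((P.roots.map fun a => Complex.normSq (w - a)).prod) := by
    intro w
    conv_lhs => rw [hfac]
    rw [eval_mul, eval_C, map_mul, eval_multiset_prod, Multiset.map_map,
      map_multiset_prod Complex.normSq, Multiset.map_map]
    refine congrArg _ (congrArg Multiset.prod (Multiset.map_congr rfl ?_))
    intro a _
    simp
  have key : Complex.normSq (P.eval x) ≤ Complex.normSq (P.eval z) := by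
    rw [hx x, hx z]
    refine mul_le_mul_of_nonneg_left ?_ (Complex.normSq_nonneg _)
    refine msprod_le _ _ _ (fun a _ => Complex.normSq_nonneg _) ?_
    intro a ha
    have him : a.im = 0 := hc a ((mem_roots hP0).mp ha)
    simp only [Complex.normSq_apply, Complex.sub_re, Complex.sub_im, hzdef, hxdef,
      Complex.add_re, Complex.add_im, Complex.mul_re, Complex.mul_im,
      Complex.ofReal_re, Complex.ofReal_im, Complex.I_re, Complex.I_im, him]
    nlinarith [sq_nonneg ((-9/5 : ℝ) - a.re)]
  have hxe : P.eval x = ((WStem.eval (-9/5) : ℝ) : ℂ) := by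
    rw [hP, eval_map, hxdef, show ((-9/5 : ℝ) : ℂ) = algebraMap ℝ ℂ (-9/5) from rfl,
      Polynomial.eval₂_at_apply]
    rfl
  have hv : WStem.eval (-9/5 : ℝ) = 10185568/390625 := by
    simp only [WStem, eval_add, eval_mul, eval_pow, eval_ofNat, eval_one, eval_X]
    norm_num
  have hze : P.eval z = ((93555245824163/6553600000000 : ℝ) : ℂ)
      + ((941336430013/81920000000 : ℝ) : ℂ) * Complex.I := by
    have hzz : z = (-9/5 : ℂ) + (1/8 : ℂ) * Complex.I := by
      rw [hzdef, hxdef]; push_cast; ring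
    simp only [hP, WStem, Polynomial.map_add, Polynomial.map_mul, Polynomial.map_pow,
      Polynomial.map_ofNat, Polynomial.map_one, Polynomial.map_X,
      eval_add, eval_mul, eval_pow, eval_ofNat, eval_one, eval_X, hzz]
    push_cast
    linear_combination ((3093209143781/262144000000 : ℂ) + (-13412456261/3276800000)*Complex.I
      + (845503607/2097152000)*Complex.I^2 + (-1157619/131072000)*Complex.I^3
      + (-245579/419430400)*Complex.I^4 + (107/5242880)*Complex.I^5
      + (3/16777216)*Complex.I^6) * Complex.I_sq
  rw [hxe, hze, hv] at key
  simp only [Complex.normSq_apply, Complex.add_re, Complex.add_im, Complex.mul_re,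
    Complex.mul_im, Complex.ofReal_re, Complex.ofReal_im, Complex.I_re, Complex.I_im] at key
  norm_num at key

/-- `W(P)(x)` has a non-real root, nonnegative coefficients, and is log-concave. -/
theorem stmt10 :
    (∃ z : ℂ, (WStem.map (algebraMap ℝ ℂ)).eval z = 0 ∧ z.im ≠ 0) ∧
    (∀ i, 0 ≤ WStem.coeff i) ∧
    (∀ i, WStem.coeff i * WStem.coeff (i + 2) ≤ (WStem.coeff (i + 1)) ^ 2) := by
  refine ⟨?_, ?_, ?_⟩
  · by_contra hcon
    push_neg at hcon
    exact WStem_no_real_roots_only (fun z hz => by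
      by_contra h
      exact h (hcon z hz))
  · intro i
    rw [coeff_WStem]
    rcases i with _|_|_|_|_|_|_|_|_|i <;> norm_num
  · intro i
    rw [coeff_WStem, coeff_WStem, coeff_WStem]
    rcases i with _|_|_|_|_|_|_|_|_|i <;> norm_num
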